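/- ODE decomposition lemma (Lemma B, x = y + r·e). Let T V(s) := Σ_a π(a|s)·(r(s,a) + inf_{p ∈ 𝒫(s,a)} p·V) be the robust average-reward Bellman operator, where each 𝒫(s,a) ⊆ Δ(S) is nonempty, let f : (S → ℝ) → ℝ be Lipschitz in the sup norm and satisfy f(x + c·e) = f(x) + c for all x and all c ∈ ℝ, and let g ∈ ℝ (in the paper, the robust average reward g^π_𝒫). Suppose x, y : [0,∞) → (S → ℝ) are differentiable and satisfy x'(t) = T(x(t)) − f(x(t))·e − x(t) and y'(t) = T(y(t)) − g·e − y(t) for all t ≥ 0, with x(0) = y(0). Then there exists a differentiable function ρ : [0,∞) → ℝ with ρ(0) = 0 and ρ'(t) = −ρ(t) + g − f(y(t)) for all t ≥ 0, such that x(t) = y(t) + ρ(t)·e for all t ≥ 0. -/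

import Mathlib

theorem ode_decomposition
    {S A : Type*} [Fintype S] [Nonempty S] [Fintype A] [Nonempty A]
    (r : S → A → ℝ) (π : S → A → ℝ)
    (hπ : ∀ s, (∀ a, 0 ≤ π s a) ∧ ∑ a, π s a = 1)
    (U : S → A → Set (S → ℝ))
    (hUne : ∀ s a, (U s a).Nonempty)
    (hUsimplex : ∀ s a, ∀ p ∈ U s a, (∀ s', 0 ≤ p s') ∧ ∑ s', p s' = 1)
    -- the robust average-reward Bellman operator
    (T : (S → ℝ) → (S → ℝ))
    (hT : ∀ (V : S → ℝ) (s : S),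
      T V s = ∑ a, π s a * (r s a + sInf {x : ℝ | ∃ p ∈ U s a, x = ∑ s', p s' * V s'}))
    (f : (S → ℝ) → ℝ) (Lf : ℝ)
    (hfLip : ∀ V₁ V₂ : S → ℝ, |f V₁ - f V₂| ≤ Lf * ‖V₁ - V₂‖)
    (hfshift : ∀ (V : S → ℝ) (c : ℝ), f (V + fun _ => c) = f V + c)
    (g : ℝ)
    (x y : ℝ → S → ℝ)
    (hx : ∀ t : ℝ, 0 ≤ t → HasDerivAt x (T (x t) - (fun _ => f (x t)) - x t) t)
    (hy : ∀ t : ℝ, 0 ≤ t → HasDerivAt y (T (y t) - (fun _ => g) - y t) t)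
    (hxy0 : x 0 = y 0) :
    ∃ ρ : ℝ → ℝ, ρ 0 = 0
      ∧ (∀ t : ℝ, 0 ≤ t → HasDerivAt ρ (-ρ t + g - f (y t)) t)
      ∧ (∀ t : ℝ, 0 ≤ t → x t = y t + fun _ => ρ t) := by
  classical
  -- the sets whose infima appear in T
  set Aset : S → A → (S → ℝ) → Set ℝ :=
    fun s a V => {x : ℝ | ∃ p ∈ U s a, x = ∑ s', p s' * V s'} with hAset
  have hAne : ∀ s a V, (Aset s a V).Nonempty := by
    intro s a V
    obtain ⟨p, hp⟩ := hUne s a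
    exact ⟨_, p, hp, rfl⟩
  have hdotle : ∀ s a (p : S → ℝ), p ∈ U s a → ∀ V : S → ℝ,
      ∑ s', p s' * V s' ≤ ‖V‖ := by
    intro s a p hp V
    obtain ⟨hp0, hp1⟩ := hUsimplex s a p hp
    calc ∑ s', p s' * V s' ≤ ∑ s', p s' * ‖V‖ := by
          refine Finset.sum_le_sum fun s' _ => ?_
          refine mul_le_mul_of_nonneg_left ?_ (hp0 s')
          exact (le_abs_self _).trans (norm_le_pi_norm V s')
      _ = ‖V‖ := by rw [← Finset.sum_mul, hp1, one_mul]
  have hdotge : ∀ s a (p : S → ℝ), p ∈ U s a → ∀ V : S → ℝ,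
      -‖V‖ ≤ ∑ s', p s' * V s' := by
    intro s a p hp V
    obtain ⟨hp0, hp1⟩ := hUsimplex s a p hp
    calc -‖V‖ = ∑ s', p s' * (-‖V‖) := by rw [← Finset.sum_mul, hp1, one_mul]
      _ ≤ ∑ s', p s' * V s' := by
          refine Finset.sum_le_sum fun s' _ => ?_
          refine mul_le_mul_of_nonneg_left ?_ (hp0 s')
          exact (neg_le_neg (norm_le_pi_norm V s')).trans (neg_abs_le _)
  have hAbdd : ∀ s a V, BddBelow (Aset s a V) := by
    intro s a V
    exact ⟨-‖V‖, fun xv ⟨p, hp, hxv⟩ => hxv ▸ hdotge s a p hp V⟩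
  -- the infima are 1-Lipschitz in V
  have hInfLe : ∀ s a (V₁ V₂ : S → ℝ),
      sInf (Aset s a V₁) ≤ sInf (Aset s a V₂) + ‖V₁ - V₂‖ := by
    intro s a V₁ V₂
    rw [← sub_le_iff_le_add]
    refine le_csInf (hAne s a V₂) ?_
    rintro b ⟨p, hp, rfl⟩
    rw [sub_le_iff_le_add]
    refine (csInf_le (hAbdd s a V₁) ⟨p, hp, rfl⟩).trans ?_
    have : ∑ s', p s' * V₁ s' - ∑ s', p s' * V₂ s' = ∑ s', p s' * (V₁ - V₂) s' := by
      rw [← Finset.sum_sub_distrib]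
      refine Finset.sum_congr rfl fun s' _ => ?_
      simp [mul_sub]
    have h2 := hdotle s a p hp (V₁ - V₂)
    linarith [this, h2]
  have hInfLip : ∀ s a (V₁ V₂ : S → ℝ),
      |sInf (Aset s a V₁) - sInf (Aset s a V₂)| ≤ ‖V₁ - V₂‖ := by
    intro s a V₁ V₂
    rw [abs_sub_le_iff]
    constructor
    · linarith [hInfLe s a V₁ V₂]
    · have := hInfLe s a V₂ V₁
      rw [norm_sub_rev] at this
      linarith
  -- T is 1-Lipschitz componentwise
  have hTlip : ∀ (V₁ V₂ : S → ℝ) (s : S), |T V₁ s - T V₂ s| ≤ ‖V₁ - V₂‖ := by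
    intro V₁ V₂ s
    rw [hT V₁ s, hT V₂ s, ← Finset.sum_sub_distrib]
    have hterm : ∀ a : A, π s a * (r s a + sInf (Aset s a V₁))
        - π s a * (r s a + sInf (Aset s a V₂))
        = π s a * (sInf (Aset s a V₁) - sInf (Aset s a V₂)) := by
      intro a; ring
    calc |∑ a, (π s a * (r s a + sInf (Aset s a V₁))
            - π s a * (r s a + sInf (Aset s a V₂)))|
        ≤ ∑ a, |π s a * (r s a + sInf (Aset s a V₁))
            - π s a * (r s a + sInf (Aset s a V₂))| := Finset.abs_sum_le_sum_abs _ _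
      _ ≤ ∑ a, π s a * ‖V₁ - V₂‖ := by
          refine Finset.sum_le_sum fun a _ => ?_
          rw [hterm a, abs_mul, abs_of_nonneg ((hπ s).1 a)]
          exact mul_le_mul_of_nonneg_left (hInfLip s a V₁ V₂) ((hπ s).1 a)
      _ = ‖V₁ - V₂‖ := by rw [← Finset.sum_mul, (hπ s).2, one_mul]
  -- T commutes with shifts by constants
  have hTshift : ∀ (V : S → ℝ) (c : ℝ) (s : S), T (V + fun _ => c) s = T V s + c := by
    intro V c s
    have hset : ∀ a : A, Aset s a (V + fun _ => c)
        = (fun z => z + c) '' (Aset s a V) := by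
      intro a
      ext w
      constructor
      · rintro ⟨p, hp, rfl⟩
        refine ⟨∑ s', p s' * V s', ⟨p, hp, rfl⟩, ?_⟩
        obtain ⟨hp0, hp1⟩ := hUsimplex s a p hp
        simp only [Pi.add_apply, mul_add]
        rw [Finset.sum_add_distrib, ← Finset.sum_mul, hp1, one_mul]
      · rintro ⟨z, ⟨p, hp, rfl⟩, rfl⟩
        refine ⟨p, hp, ?_⟩
        obtain ⟨hp0, hp1⟩ := hUsimplex s a p hp
        simp only [Pi.add_apply, mul_add]
        rw [Finset.sum_add_distrib, ← Finset.sum_mul, hp1, one_mul]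
    have hsInf : ∀ a : A, sInf (Aset s a (V + fun _ => c)) = sInf (Aset s a V) + c := by
      intro a
      rw [hset a]
      exact ((OrderIso.addRight c).map_csInf' (hAne s a V) (hAbdd s a V)).symm
    rw [hT, hT]
    calc ∑ a, π s a * (r s a + sInf (Aset s a (V + fun _ => c)))
        = ∑ a, (π s a * (r s a + sInf (Aset s a V)) + π s a * c) := by
          refine Finset.sum_congr rfl fun a _ => ?_
          rw [hsInf a]; ring
      _ = (∑ a, π s a * (r s a + sInf (Aset s a V))) + c := by
          rw [Finset.sum_add_distrib, ← Finset.sum_mul, (hπ s).2, one_mul]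
  -- the vector field
  set F : (S → ℝ) → (S → ℝ) := fun V => T V - (fun _ => f V) - V with hF
  set K : NNReal := Lf.toNNReal + 2 with hK
  have hKcoe : (2 : ℝ) + Lf ≤ (K : ℝ) := by
    have : (K : ℝ) = max Lf 0 + 2 := by
      rw [hK]; push_cast [Real.coe_toNNReal']; ring
    rw [this]
    have := le_max_left Lf 0
    linarith
  have hFlip : LipschitzWith K F := by
    refine LipschitzWith.of_dist_le_mul fun V₁ V₂ => ?_
    rw [dist_eq_norm, dist_eq_norm]
    have hpt : ∀ s : S, ‖(F V₁ - F V₂) s‖ ≤ (K : ℝ) * ‖V₁ - V₂‖ := by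
      intro s
      have h1 : (F V₁ - F V₂) s
          = (T V₁ s - T V₂ s) - (f V₁ - f V₂) - (V₁ s - V₂ s) := by
        simp only [hF, Pi.sub_apply]; ring
      rw [Real.norm_eq_abs, h1]
      have h2 : |(T V₁ s - T V₂ s) - (f V₁ - f V₂) - (V₁ s - V₂ s)|
          ≤ |T V₁ s - T V₂ s| + |f V₁ - f V₂| + |V₁ s - V₂ s| := by
        calc _ ≤ |(T V₁ s - T V₂ s) - (f V₁ - f V₂)| + |V₁ s - V₂ s| := abs_sub _ _
          _ ≤ _ := by gcongr; exact abs_sub _ _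
      have h3 : |V₁ s - V₂ s| ≤ ‖V₁ - V₂‖ := by
        have := norm_le_pi_norm (V₁ - V₂) s
        simpa using this
      have h4 := hTlip V₁ V₂ s
      have h5 := hfLip V₁ V₂
      have h6 : (0:ℝ) ≤ ‖V₁ - V₂‖ := norm_nonneg _
      nlinarith [hKcoe]
    calc ‖F V₁ - F V₂‖ ≤ (K : ℝ) * ‖V₁ - V₂‖ := by
          refine (pi_norm_le_iff_of_nonneg (by positivity)).mpr hpt
      _ = (K : ℝ) * ‖V₁ - V₂‖ := rfl
  -- continuity of f and of y on [0,∞)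
  have hfcont : Continuous f := by
    refine (LipschitzWith.of_dist_le_mul (K := Lf.toNNReal) fun V₁ V₂ => ?_).continuous
    rw [Real.dist_eq, dist_eq_norm]
    refine (hfLip V₁ V₂).trans ?_
    have : Lf ≤ (Lf.toNNReal : ℝ) := by
      rw [Real.coe_toNNReal']; exact le_max_left _ _
    exact mul_le_mul_of_nonneg_right this (norm_nonneg _)
  have hycont : ∀ t : ℝ, 0 ≤ t → ContinuousAt y t := fun t ht => (hy t ht).continuousAt
  -- the forcing term, extended continuously to all of ℝ
  set h : ℝ → ℝ := fun u => g - f (y (max u 0)) with hh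
  have hmax : Continuous fun u : ℝ => max u 0 := continuous_id.max continuous_const
  have hycomp : Continuous fun u : ℝ => y (max u 0) := by
    refine continuous_iff_continuousAt.mpr fun u => ?_
    exact ContinuousAt.comp (g := y) (f := fun u : ℝ => max u 0)
      (hycont _ (le_max_right u 0)) hmax.continuousAt
  have hhcont : Continuous h := continuous_const.sub (hfcont.comp hycomp)
  have hheq : ∀ t : ℝ, 0 ≤ t → h t = g - f (y t) := by
    intro t ht; simp [hh, max_eq_left ht]
  -- the candidate ρ
  set I : ℝ → ℝ := fun t => ∫ u in (0:ℝ)..t, Real.exp u * h u with hI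
  set ρ : ℝ → ℝ := fun t => Real.exp (-t) * I t with hρ
  have hIderiv : ∀ t : ℝ, HasDerivAt I (Real.exp t * h t) t := by
    intro t
    refine intervalIntegral.integral_hasDerivAt_right
      ((Real.continuous_exp.mul hhcont).intervalIntegrable _ _)
      (Real.continuous_exp.mul hhcont).aestronglyMeasurable.stronglyMeasurableAtFilter
      (Real.continuous_exp.mul hhcont).continuousAt
  have hρ0 : ρ 0 = 0 := by simp [hρ, hI]
  have hρderiv : ∀ t : ℝ, HasDerivAt ρ (-ρ t + h t) t := by
    intro t
    have hexp : HasDerivAt (fun t : ℝ => Real.exp (-t)) (-Real.exp (-t)) t := by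
      have := (Real.hasDerivAt_exp (-t)).comp t (hasDerivAt_neg t)
      exact (by simpa using this : HasDerivAt (Real.exp ∘ Neg.neg) (-Real.exp (-t)) t)
    have hmul := hexp.mul (hIderiv t)
    have e1 : Real.exp (-t) * Real.exp t = 1 := by
      rw [← Real.exp_add]; simp
    have heq : -Real.exp (-t) * I t + Real.exp (-t) * (Real.exp t * h t)
        = -ρ t + h t := by
      show _ = -(Real.exp (-t) * I t) + h t
      linear_combination h t * e1
    rw [heq] at hmul
    exact hmul
  -- z := y + ρ • e solves the same ODE as x
  set z : ℝ → S → ℝ := fun t => y t + fun _ => ρ t with hz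
  have hzderiv : ∀ t : ℝ, 0 ≤ t → HasDerivAt z (F (z t)) t := by
    intro t ht
    rw [hasDerivAt_pi]
    intro s
    have hys := (hasDerivAt_pi.mp (hy t ht)) s
    have hcomp : (fun u => z u s) = fun u => y u s + ρ u := by
      funext u; simp [hz]
    have hsum := hys.add (hρderiv t)
    rw [show (fun x => y x s) + ρ = fun u => z u s from hcomp.symm] at hsum
    have hval : F (z t) s = ((T (y t) - fun _ : S => g) - y t) s + (-ρ t + h t) := by
      have hTz : T (y t + fun _ => ρ t) s = T (y t) s + ρ t := hTshift (y t) (ρ t) s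
      have hfz : f (y t + fun _ => ρ t) = f (y t) + ρ t := hfshift (y t) (ρ t)
      simp only [hF, hz, Pi.sub_apply, Pi.add_apply, hTz, hfz]
      rw [hheq t ht]
      ring
    rw [hval]
    exact hsum
  -- uniqueness: x = z on [0, ∞)
  have hxz : ∀ t : ℝ, 0 ≤ t → x t = z t := by
    intro t ht
    have huniq := ODE_solution_unique (v := fun _ : ℝ => F) (K := K)
      (f := x) (g := z) (a := 0) (b := t)
      (fun _ => hFlip)
      (fun u hu => ((hx u hu.1).continuousAt).continuousWithinAt)
      (fun u hu => (hx u hu.1).hasDerivWithinAt)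
      (fun u hu => ((hzderiv u hu.1).continuousAt).continuousWithinAt)
      (fun u hu => ((hzderiv u hu.1)).hasDerivWithinAt)
      (by
        have : z 0 = y 0 := by
          funext s; simp [hz, hρ0]
        rw [this, hxy0])
    exact huniq ⟨ht, le_refl t⟩
  refine ⟨ρ, hρ0, ?_, ?_⟩
  · intro t ht
    have := hρderiv t
    rw [hheq t ht, ← add_sub_assoc] at this
    exact this
  · intro t ht
    exact hxz t ht
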